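/- The function Φ(y) = (y·ln y − y + 1)/(√y − 1)² (defined for y > 0, y ≠ 1, extended continuously by Φ(1) = 2) satisfies Φ(y) ≥ 1 for all y > 0. -/
import Mathlib


noncomputable def Phi (y : ℝ) : ℝ :=
  if y = 1 then 2 else (y * Real.log y - y + 1) / (Real.sqrt y - 1) ^ 2

theorem Phi_ge_one (y : ℝ) (hy : 0 < y) : Phi y ≥ 1 := by
  unfold Phi
  by_cases h : y = 1
  · simp [h]
  · rw [if_neg h]
    set s := Real.sqrt y with hs
    have hspos : 0 < s := Real.sqrt_pos.mpr hy
    have hs2 : s ^ 2 = y := Real.sq_sqrt hy.le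
    have hsne : s ≠ 1 := by
      intro hc
      apply h
      rw [← hs2, hc]; norm_num
    have hden : 0 < (s - 1) ^ 2 := by
      have : s - 1 ≠ 0 := sub_ne_zero.mpr hsne
      positivity
    rw [ge_iff_le, le_div_iff₀ hden]
    have hlog : Real.log y = 2 * Real.log s := by
      rw [← hs2, Real.log_pow]; push_cast; ring
    have hkey : Real.log (1 / s) ≤ 1 / s - 1 := Real.log_le_sub_one_of_pos (by positivity)
    rw [Real.log_div one_ne_zero hspos.ne', Real.log_one] at hkey
    -- s * log s ≥ s - 1
    have h1 : s - 1 ≤ s * Real.log s := by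
      have := mul_le_mul_of_nonneg_left hkey hspos.le
      have hs1 : s * (1 / s) = 1 := by field_simp
      nlinarith
    rw [hlog, ← hs2]
    nlinarith [mul_le_mul_of_nonneg_left h1 hspos.le]
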